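/- (Maximal number of orthonormal bases with overlap constraints.) Let d ≥ 2 and suppose there exist m orthonormal bases {e^z_a}_{a=0}^{d-1} (z = 1,…,m) of ℂ^d. Then m ≤ ((d+1)/2)·(1 + √(1 + 8λ(C)(λ(C) − 1)/(d² − 1))), where λ(C) is computed from the overlaps of these bases. -/

import Mathlib

open Matrix BigOperators

/-- `c^{z,z'}_min = min_{a,a'} |⟨e^z_a, e^{z'}_{a'}⟩|²`. -/
noncomputable def cminP (d m : ℕ) (e : Fin m → Fin d → Fin d → ℂ) (z z' : Fin m) : ℝ :=
  ⨅ q : Fin d × Fin d, ‖star (e z q.1) ⬝ᵥ e z' q.2‖ ^ 2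

/-- `G^{z,z'} = 1 − (d+1)c^{z,z'}_min + (1/d)Σ_{a,a'} |⟨e^z_a, e^{z'}_{a'}⟩|⁴`. -/
noncomputable def GP (d m : ℕ) (e : Fin m → Fin d → Fin d → ℂ) (z z' : Fin m) : ℝ :=
  1 - ((d : ℝ) + 1) * cminP d m e z z' +
    (1 / d) * ∑ a : Fin d, ∑ a' : Fin d, ‖star (e z a) ⬝ᵥ e z' a'‖ ^ 4

/-- `λ(C) = (1/2)(1 + √(1 + 2d Σ_{z≠z'} G^{z,z'}))`. -/
noncomputable def lamC (d m : ℕ) (e : Fin m → Fin d → Fin d → ℂ) : ℝ :=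
  (1 + Real.sqrt (1 + 2 * d *
    ∑ z : Fin m, ∑ z' : Fin m, if z = z' then 0 else GP d m e z z')) / 2

/-- `T(C) = min{λ(C), m}`. -/
noncomputable def TCval (d m : ℕ) (e : Fin m → Fin d → Fin d → ℂ) : ℝ :=
  min (lamC d m e) m

lemma dot_expand (d : ℕ) (u v : Fin d → ℂ) :
    star u ⬝ᵥ v = ∑ i, (starRingEnd ℂ) (u i) * v i := by
  simp [dotProduct, Matrix.star_apply, Complex.star_def]


lemma gram_entry (d : ℕ) (hd : (d:ℂ) ≠ 0) (u v : Fin d → ℂ)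
    (hu : star u ⬝ᵥ u = 1) (hv : star v ⬝ᵥ v = 1) :
    ∑ p : Fin d × Fin d,
      (u p.1 * (starRingEnd ℂ) (u p.2) - if p.1 = p.2 then ((d:ℂ))⁻¹ else 0) *
      (starRingEnd ℂ) (v p.1 * (starRingEnd ℂ) (v p.2) - if p.1 = p.2 then ((d:ℂ))⁻¹ else 0)
    = (Complex.normSq (star u ⬝ᵥ v) : ℂ) - (d:ℂ)⁻¹ := by
  have hu' : ∑ i, (starRingEnd ℂ) (u i) * u i = 1 := by rw [← dot_expand, hu]
  have hv' : ∑ i, (starRingEnd ℂ) (v i) * v i = 1 := by rw [← dot_expand, hv]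
  have hconj : ∀ p : Fin d × Fin d,
      (starRingEnd ℂ) (v p.1 * (starRingEnd ℂ) (v p.2) - if p.1 = p.2 then ((d:ℂ))⁻¹ else 0)
      = (starRingEnd ℂ) (v p.1) * v p.2 - (if p.1 = p.2 then ((d:ℂ))⁻¹ else 0) := by
    intro p
    rw [map_sub, _root_.map_mul, Complex.conj_conj, apply_ite (starRingEnd ℂ), map_zero, map_inv₀,
      map_natCast]
  simp only [hconj]
  rw [Fintype.sum_prod_type]
  have expand : ∀ i j : Fin d,
      (u i * (starRingEnd ℂ) (u j) - if i = j then ((d:ℂ))⁻¹ else 0) *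
        ((starRingEnd ℂ) (v i) * v j - if i = j then ((d:ℂ))⁻¹ else 0)
      = (u i * (starRingEnd ℂ) (v i)) * ((starRingEnd ℂ) (u j) * v j)
        - (if i = j then (u i * (starRingEnd ℂ) (u j)) * ((d:ℂ))⁻¹ else 0)
        - (if i = j then ((starRingEnd ℂ) (v i) * v j) * ((d:ℂ))⁻¹ else 0)
        + (if i = j then ((d:ℂ))⁻¹ * ((d:ℂ))⁻¹ else 0) := by
    intro i j; split <;> ring
  simp only [expand, Finset.sum_sub_distrib, Finset.sum_add_distrib, Finset.sum_ite_eq,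
    Finset.mem_univ, if_true]
  rw [← Finset.sum_mul_sum]
  have h1 : ∑ i, u i * (starRingEnd ℂ) (v i) = (starRingEnd ℂ) (star u ⬝ᵥ v) := by
    rw [dot_expand, map_sum]; simp [mul_comm]
  have h2 : ∑ j, (starRingEnd ℂ) (u j) * v j = star u ⬝ᵥ v := (dot_expand d u v).symm
  have h3 : ∑ i, u i * (starRingEnd ℂ) (u i) * ((d:ℂ))⁻¹ = (d:ℂ)⁻¹ := by
    rw [← Finset.sum_mul]
    have : ∑ i, u i * (starRingEnd ℂ) (u i) = 1 := by rw [← hu']; exact Finset.sum_congr rfl (fun i _ => mul_comm _ _)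
    rw [this, one_mul]
  have h4 : ∑ i, (starRingEnd ℂ) (v i) * v i * ((d:ℂ))⁻¹ = (d:ℂ)⁻¹ := by
    rw [← Finset.sum_mul, hv', one_mul]
  rw [h1, h2, h3, h4]
  simp only [Finset.sum_const, Finset.card_univ, Fintype.card_fin, nsmul_eq_mul]
  rw [mul_comm ((starRingEnd ℂ) (star u ⬝ᵥ v)), Complex.mul_conj]
  field_simp
  ring

lemma parseval (d : ℕ) (u : Fin d → ℂ) (hu : star u ⬝ᵥ u = 1) (W : Fin d → Fin d → ℂ)
    (hW : ∀ a b, star (W a) ⬝ᵥ W b = if a = b then (1:ℂ) else 0) :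
    ∑ a' : Fin d, (Complex.normSq (star u ⬝ᵥ W a') : ℂ) = 1 := by
  have key : ∀ i j : Fin d, ∑ a' : Fin d, W a' i * (starRingEnd ℂ) (W a' j)
      = if i = j then (1:ℂ) else 0 := by
    intro i j
    have hA : (Matrix.of W) * (Matrix.of W)ᴴ = 1 := by
      ext a b
      have := hW a b
      rw [dot_expand] at this
      have : (starRingEnd ℂ) (∑ k, (starRingEnd ℂ) (W a k) * W b k)
          = (starRingEnd ℂ) (if a = b then (1:ℂ) else 0) := by rw [this]
      simp only [map_sum, _root_.map_mul, Complex.conj_conj, apply_ite (starRingEnd ℂ),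
        _root_.map_one, map_zero] at this
      simpa [Matrix.mul_apply, Matrix.conjTranspose_apply, Matrix.one_apply, mul_comm,
        Complex.star_def] using this
    have hA' : (Matrix.of W)ᴴ * (Matrix.of W) = 1 := mul_eq_one_comm.mp hA
    have h2 := congrArg (fun M => M i j) hA'
    simp only [Matrix.mul_apply, Matrix.conjTranspose_apply, Matrix.one_apply,
      Matrix.of_apply, Complex.star_def] at h2
    have h3 : (starRingEnd ℂ) (∑ a', (starRingEnd ℂ) (W a' i) * W a' j)
        = (starRingEnd ℂ) (if i = j then (1:ℂ) else 0) := by rw [h2]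
    simp only [map_sum, _root_.map_mul, Complex.conj_conj, apply_ite (starRingEnd ℂ),
      _root_.map_one, map_zero] at h3
    rw [← h3]
  have expand1 : ∀ a' : Fin d, (Complex.normSq (star u ⬝ᵥ W a') : ℂ)
      = ∑ i, ∑ j, (starRingEnd ℂ) (u i) * u j * (W a' i * (starRingEnd ℂ) (W a' j)) := by
    intro a'
    rw [← Complex.mul_conj, dot_expand, map_sum, Finset.sum_mul_sum]
    exact Finset.sum_congr rfl fun i _ => Finset.sum_congr rfl fun j _ => by
      simp only [_root_.map_mul, Complex.conj_conj]; ring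
  simp only [expand1]
  rw [Finset.sum_comm]
  have : ∀ i : Fin d, ∑ a' : Fin d, ∑ j, (starRingEnd ℂ) (u i) * u j * (W a' i * (starRingEnd ℂ) (W a' j))
      = (starRingEnd ℂ) (u i) * u i := by
    intro i
    rw [Finset.sum_comm]
    have : ∀ j, ∑ a' : Fin d, (starRingEnd ℂ) (u i) * u j * (W a' i * (starRingEnd ℂ) (W a' j))
        = (starRingEnd ℂ) (u i) * u j * (if i = j then (1:ℂ) else 0) := by
      intro j; rw [← Finset.mul_sum, key]
    simp only [this, mul_ite, mul_one, mul_zero, Finset.sum_ite_eq, Finset.mem_univ, if_true]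
  simp only [this]
  rw [← dot_expand, hu]

lemma sum_normSq_gram {ι κ : Type*} [Fintype ι] [Fintype κ] (N : κ → ι → ℂ) :
    ∑ p : ι, ∑ q : ι, (Complex.normSq (∑ k, N k p * (starRingEnd ℂ) (N k q)) : ℂ)
    = ∑ k : κ, ∑ l : κ, (Complex.normSq (∑ p, N k p * (starRingEnd ℂ) (N l p)) : ℂ) := by
  have e1 : ∀ p q : ι, (Complex.normSq (∑ k, N k p * (starRingEnd ℂ) (N k q)) : ℂ)
      = ∑ k, ∑ l, N k p * (starRingEnd ℂ) (N k q) * ((starRingEnd ℂ) (N l p) * N l q) := by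
    intro p q
    rw [← Complex.mul_conj, map_sum, Finset.sum_mul_sum]
    exact Finset.sum_congr rfl fun k _ => Finset.sum_congr rfl fun l _ => by
      simp only [map_sub, _root_.map_mul, Complex.conj_conj]
  have e2 : ∀ k l : κ, (Complex.normSq (∑ p, N k p * (starRingEnd ℂ) (N l p)) : ℂ)
      = ∑ p, ∑ q, N k p * (starRingEnd ℂ) (N l p) * ((starRingEnd ℂ) (N k q) * N l q) := by
    intro k l
    rw [← Complex.mul_conj, map_sum, Finset.sum_mul_sum]
    exact Finset.sum_congr rfl fun p _ => Finset.sum_congr rfl fun q _ => by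
      simp only [map_sub, _root_.map_mul, Complex.conj_conj]
  simp only [e1, e2]
  trans ∑ pq : ι × ι, ∑ kl : κ × κ,
      N kl.1 pq.1 * (starRingEnd ℂ) (N kl.1 pq.2) * ((starRingEnd ℂ) (N kl.2 pq.1) * N kl.2 pq.2)
  · simp only [Fintype.sum_prod_type]
  rw [Finset.sum_comm]
  simp only [Fintype.sum_prod_type]
  exact Finset.sum_congr rfl fun k _ => Finset.sum_congr rfl fun l _ =>
    Finset.sum_congr rfl fun p _ => Finset.sum_congr rfl fun q _ => by ring

section Main
variable (d m : ℕ) (e : Fin m → Fin d → Fin d → ℂ)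

/-- squared overlaps -/
noncomputable def Mq (z : Fin m) (a : Fin d) (z' : Fin m) (a' : Fin d) : ℝ :=
  Complex.normSq (star (e z a) ⬝ᵥ e z' a')

variable {d m e}
variable (honb : ∀ z a b, star (e z a) ⬝ᵥ e z b = (if a = b then (1 : ℂ) else 0))

include honb

lemma hnorm (z : Fin m) (a : Fin d) : star (e z a) ⬝ᵥ e z a = 1 := by
  simpa using honb z a a

lemma Mq_diag (z : Fin m) (a a' : Fin d) :
    Mq d m e z a z a' = if a = a' then 1 else 0 := by
  rw [Mq, honb z a a']
  split <;> simp

lemma row_sum (z : Fin m) (a : Fin d) (z' : Fin m) :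
    ∑ a' : Fin d, Mq d m e z a z' a' = 1 := by
  have h := parseval d (e z a) (hnorm honb z a) (e z') (honb z')
  exact_mod_cast h

lemma sum_sum_Mq (z z' : Fin m) : ∑ a : Fin d, ∑ a' : Fin d, Mq d m e z a z' a' = d := by
  simp [row_sum honb]

lemma cmin_le (hd : 2 ≤ d) (z z' : Fin m) : cminP d m e z z' ≤ 1 / d := by
  have hd0 : (0:ℝ) < d := by positivity
  have hle : ∀ q : Fin d × Fin d,
      cminP d m e z z' ≤ ‖star (e z q.1) ⬝ᵥ e z' q.2‖ ^ 2 := fun q =>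
    ciInf_le (Finite.bddBelow_range _) q
  have hsum : (Fintype.card (Fin d × Fin d) : ℝ) * cminP d m e z z'
      ≤ ∑ q : Fin d × Fin d, ‖star (e z q.1) ⬝ᵥ e z' q.2‖ ^ 2 := by
    calc (Fintype.card (Fin d × Fin d) : ℝ) * cminP d m e z z'
        = ∑ _q : Fin d × Fin d, cminP d m e z z' := by
          rw [Finset.sum_const, nsmul_eq_mul, Finset.card_univ]
      _ ≤ _ := Finset.sum_le_sum fun q _ => hle q
  have hval : ∑ q : Fin d × Fin d, ‖star (e z q.1) ⬝ᵥ e z' q.2‖ ^ 2 = d := by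
    rw [Fintype.sum_prod_type]
    simp only [Complex.sq_norm]
    exact sum_sum_Mq honb z z'
  rw [hval] at hsum
  simp only [Fintype.card_prod, Fintype.card_fin] at hsum
  rw [le_div_iff₀ hd0]
  push_cast at hsum
  nlinarith

lemma Dv_nonneg (hd : 2 ≤ d) (z z' : Fin m) :
    0 ≤ (∑ a : Fin d, ∑ a' : Fin d, Mq d m e z a z' a' ^ 2) - 1 := by
  have hd0 : (0:ℝ) < d := by positivity
  have h1 : (∑ q : Fin d × Fin d, Mq d m e z q.1 z' q.2) ^ 2
      ≤ (Finset.univ.card : ℝ) * ∑ q : Fin d × Fin d, Mq d m e z q.1 z' q.2 ^ 2 :=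
    sq_sum_le_card_mul_sum_sq
  rw [Fintype.sum_prod_type, Fintype.sum_prod_type] at h1
  rw [sum_sum_Mq honb] at h1
  simp only [Finset.card_univ, Fintype.card_prod, Fintype.card_fin] at h1
  push_cast at h1
  nlinarith [mul_pos hd0 hd0]

lemma GP_ge (hd : 2 ≤ d) (z z' : Fin m) :
    ((∑ a : Fin d, ∑ a' : Fin d, Mq d m e z a z' a' ^ 2) - 1) / d ≤ GP d m e z z' := by
  have hd0 : (0:ℝ) < d := by positivity
  have h4 : ∀ (x : ℂ), ‖x‖ ^ 4 = Complex.normSq x ^ 2 := by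
    intro x
    rw [show (4:ℕ) = 2*2 from rfl, pow_mul, Complex.sq_norm]
  have hGP : GP d m e z z' = 1 - ((d:ℝ)+1) * cminP d m e z z'
      + (1/d) * ∑ a : Fin d, ∑ a' : Fin d, Mq d m e z a z' a' ^ 2 := by
    rw [GP]
    congr 2
    exact Finset.sum_congr rfl fun a _ => Finset.sum_congr rfl fun a' _ => h4 _
  rw [hGP]
  have hc := cmin_le honb hd z z'
  have h1 : ((d:ℝ)+1) * cminP d m e z z' ≤ ((d:ℝ)+1) * (1/d) := by
    apply mul_le_mul_of_nonneg_left hc (by positivity)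
  have expand : (((d:ℝ))+1) * (1/d) = 1 + 1/d := by field_simp
  rw [sub_div, div_eq_mul_one_div, mul_comm]
  linarith

lemma GP_nonneg (hd : 2 ≤ d) (z z' : Fin m) : 0 ≤ GP d m e z z' := by
  have hd0 : (0:ℝ) < d := by positivity
  have h1 := GP_ge honb hd z z'
  have h2 := Dv_nonneg honb hd z z'
  have : 0 ≤ ((∑ a : Fin d, ∑ a' : Fin d, Mq d m e z a z' a' ^ 2) - 1) / d := by positivity
  linarith


omit honb in
lemma conj_swap {ι : Type*} [Fintype ι] (f g : ι → ℂ) :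
    ∑ p, f p * (starRingEnd ℂ) (g p) = (starRingEnd ℂ) (∑ p, g p * (starRingEnd ℂ) (f p)) := by
  rw [map_sum]
  exact Finset.sum_congr rfl fun p _ => by
    rw [_root_.map_mul, Complex.conj_conj]; ring

lemma CSmain (hd : 2 ≤ d) :
    ((m:ℝ) * ((d:ℝ)-1))^2 ≤ ((d:ℝ)^2 - 1) *
      ∑ k : Fin m × Fin d, ∑ l : Fin m × Fin d, (Mq d m e k.1 k.2 l.1 l.2 - 1/(d:ℝ))^2 := by
  have hd2 : (2:ℝ) ≤ (d:ℝ) := by exact_mod_cast hd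
  have hd0 : (0:ℝ) < d := by linarith
  have hdne : (d:ℝ) ≠ 0 := hd0.ne'
  have hdC : (d:ℂ) ≠ 0 := by
    exact Nat.cast_ne_zero.mpr (by omega : d ≠ 0)
  set A : ℝ := (m:ℝ) * ((d:ℝ)-1) with hAdef
  have hAnn : 0 ≤ A := mul_nonneg (by positivity) (by linarith)
  have hd21 : (0:ℝ) < (d:ℝ)^2 - 1 := by nlinarith
  set t : ℝ := A / ((d:ℝ)^2 - 1) with htdef
  have ht : 0 ≤ t := div_nonneg hAnn hd21.le
  have htd : 0 ≤ t / d := by positivity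
  set s : ℝ := Real.sqrt (t/d) with hsdef
  have hs2 : (s:ℝ)^2 = t/d := Real.sq_sqrt htd
  set N : ((Fin m × Fin d) ⊕ Unit) → (Fin d × Fin d) → ℂ := fun k p =>
    Sum.elim
      (fun k : Fin m × Fin d => e k.1 k.2 p.1 * (starRingEnd ℂ) (e k.1 k.2 p.2) -
        if p.1 = p.2 then ((d:ℂ))⁻¹ else 0)
      (fun _ : Unit => (s : ℂ) * (if p.1 = p.2 then 1 else 0)) k with hNdef
  have hsum1 : ∀ (k : Fin m × Fin d),
      ∑ i : Fin d, e k.1 k.2 i * (starRingEnd ℂ) (e k.1 k.2 i) = 1 := by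
    intro k
    have h := hnorm honb k.1 k.2
    rw [dot_expand] at h
    rw [← h]
    exact Finset.sum_congr rfl fun i _ => mul_comm _ _
  have hg_ll : ∀ k l : Fin m × Fin d,
      ∑ p : Fin d × Fin d, N (Sum.inl k) p * (starRingEnd ℂ) (N (Sum.inl l) p)
        = ((Mq d m e k.1 k.2 l.1 l.2 : ℝ) : ℂ) - ((d:ℂ))⁻¹ := by
    intro k l
    simp only [hNdef, Sum.elim_inl]
    exact gram_entry d hdC _ _ (hnorm honb k.1 k.2) (hnorm honb l.1 l.2)
  have hg_lr : ∀ k : Fin m × Fin d,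
      ∑ p : Fin d × Fin d, N (Sum.inl k) p * (starRingEnd ℂ) (N (Sum.inr ()) p) = 0 := by
    intro k
    simp only [hNdef, Sum.elim_inl, Sum.elim_inr]
    have hterm : ∀ p : Fin d × Fin d,
        (e k.1 k.2 p.1 * (starRingEnd ℂ) (e k.1 k.2 p.2) - if p.1 = p.2 then ((d:ℂ))⁻¹ else 0) *
          (starRingEnd ℂ) ((s : ℂ) * (if p.1 = p.2 then 1 else 0))
        = if p.1 = p.2 then
            (e k.1 k.2 p.1 * (starRingEnd ℂ) (e k.1 k.2 p.2) - ((d:ℂ))⁻¹) * (s:ℂ) else 0 := by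
      intro p
      rw [_root_.map_mul, Complex.conj_ofReal, apply_ite (starRingEnd ℂ), _root_.map_one, map_zero]
      split <;> ring
    simp only [hterm]
    rw [Fintype.sum_prod_type]
    have hrow : ∀ i : Fin d, (∑ j : Fin d, if i = j then
        (e k.1 k.2 i * (starRingEnd ℂ) (e k.1 k.2 j) - ((d:ℂ))⁻¹) * (s:ℂ) else 0)
        = (e k.1 k.2 i * (starRingEnd ℂ) (e k.1 k.2 i) - ((d:ℂ))⁻¹) * (s:ℂ) := by
      intro i
      rw [Finset.sum_ite_eq (Finset.univ : Finset (Fin d)) i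
        (fun j => (e k.1 k.2 i * (starRingEnd ℂ) (e k.1 k.2 j) - ((d:ℂ))⁻¹) * (s:ℂ))]
      simp
    simp only [hrow]
    rw [← Finset.sum_mul, Finset.sum_sub_distrib, hsum1 k]
    simp [Finset.card_univ, mul_inv_cancel₀ hdC]
  have hg_rl : ∀ k : Fin m × Fin d,
      ∑ p : Fin d × Fin d, N (Sum.inr ()) p * (starRingEnd ℂ) (N (Sum.inl k) p) = 0 := by
    intro k
    rw [conj_swap, hg_lr k, map_zero]
  have hg_rr :
      ∑ p : Fin d × Fin d, N (Sum.inr ()) p * (starRingEnd ℂ) (N (Sum.inr ()) p) = (t : ℂ) := by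
    simp only [hNdef, Sum.elim_inr]
    have hterm : ∀ p : Fin d × Fin d,
        ((s : ℂ) * (if p.1 = p.2 then 1 else 0)) *
          (starRingEnd ℂ) ((s : ℂ) * (if p.1 = p.2 then 1 else 0))
        = if p.1 = p.2 then ((s:ℝ)^2 : ℝ) else 0 := by
      intro p
      rw [_root_.map_mul, Complex.conj_ofReal, apply_ite (starRingEnd ℂ), _root_.map_one, map_zero]
      split
      · push_cast; ring
      · simp
    have hcount : ∑ p : Fin d × Fin d, (if p.1 = p.2 then (s^2:ℝ) else 0) = d * s^2 := by
      rw [Fintype.sum_prod_type]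
      have : ∀ i : Fin d, (∑ j : Fin d, if i = j then (s^2:ℝ) else 0) = s^2 := by
        intro i
        rw [Finset.sum_ite_eq (Finset.univ : Finset (Fin d)) i fun _ => (s^2:ℝ)]
        simp
      simp only [this, Finset.sum_const, Finset.card_univ, Fintype.card_fin, nsmul_eq_mul]
    calc ∑ p : Fin d × Fin d, ((s:ℂ) * if p.1 = p.2 then (1:ℂ) else 0) *
            (starRingEnd ℂ) ((s:ℂ) * if p.1 = p.2 then (1:ℂ) else 0)
        = ∑ p : Fin d × Fin d, (((if p.1 = p.2 then (s^2:ℝ) else 0) : ℝ) : ℂ) :=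
          Finset.sum_congr rfl fun p _ => hterm p
      _ = ((∑ p : Fin d × Fin d, (if p.1 = p.2 then (s^2:ℝ) else 0) : ℝ) : ℂ) := by
          rw [Complex.ofReal_sum]
      _ = ((d * s^2 : ℝ) : ℂ) := by rw [hcount]
      _ = (t:ℂ) := by
          rw [hs2]
          congr 1
          field_simp
  -- diagonal of the frame operator
  set r : Fin d × Fin d → ℝ := fun p => ∑ k, Complex.normSq (N k p) with hrdef
  have hFdiag : ∀ p : Fin d × Fin d, ∑ k, N k p * (starRingEnd ℂ) (N k p) = ((r p : ℝ) : ℂ) := by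
    intro p
    rw [hrdef]
    push_cast
    exact Finset.sum_congr rfl fun k _ => Complex.mul_conj (N k p)
  have hr_sum : ∑ p : Fin d × Fin d, r p = A + t := by
    have hC : ((∑ p : Fin d × Fin d, r p : ℝ) : ℂ) = ((A + t : ℝ) : ℂ) := by
      push_cast
      calc (∑ p : Fin d × Fin d, (r p : ℂ))
          = ∑ p : Fin d × Fin d, ∑ k, N k p * (starRingEnd ℂ) (N k p) := by
            exact Finset.sum_congr rfl fun p _ => (hFdiag p).symm
        _ = ∑ k, ∑ p : Fin d × Fin d, N k p * (starRingEnd ℂ) (N k p) := Finset.sum_comm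
        _ = (A : ℂ) + (t : ℂ) := by
            rw [Fintype.sum_sum_type]
            have h1 : ∀ k : Fin m × Fin d,
                ∑ p : Fin d × Fin d, N (Sum.inl k) p * (starRingEnd ℂ) (N (Sum.inl k) p)
                = 1 - ((d:ℂ))⁻¹ := by
              intro k
              rw [hg_ll k k]
              have : Mq d m e k.1 k.2 k.1 k.2 = 1 := by
                rw [Mq_diag honb]; simp
              rw [this]; norm_num
            simp only [h1]
            simp only [Finset.sum_const, Finset.card_univ, Fintype.card_prod, Fintype.card_fin,
              nsmul_eq_mul, Fintype.univ_punit]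
            rw [Finset.sum_singleton]
            have h2 : ∑ p : Fin d × Fin d,
                N (Sum.inr PUnit.unit) p * (starRingEnd ℂ) (N (Sum.inr PUnit.unit) p) = (t:ℂ) :=
              hg_rr
            rw [h2]
            have : ((m * d : ℕ) : ℂ) * (1 - ((d:ℂ))⁻¹) = (A : ℂ) := by
              rw [hAdef]; push_cast; field_simp
            rw [this]
    exact_mod_cast hC
  set B : ℝ := ∑ k : Fin m × Fin d, ∑ l : Fin m × Fin d,
      (Mq d m e k.1 k.2 l.1 l.2 - 1/(d:ℝ))^2 with hBdef
  -- Cauchy–Schwarz on the diagonal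
  have hcs1 : (A + t)^2 ≤ ((d:ℝ)*(d:ℝ)) * ∑ p : Fin d × Fin d, (r p)^2 := by
    have h := sq_sum_le_card_mul_sum_sq (s := (Finset.univ : Finset (Fin d × Fin d))) (f := r)
    rw [hr_sum] at h
    simpa [Finset.card_univ] using h
  have hdiag_le : ∀ p : Fin d × Fin d, (r p)^2 ≤
      ∑ q : Fin d × Fin d, Complex.normSq (∑ k, N k p * (starRingEnd ℂ) (N k q)) := by
    intro p
    have h1 : Complex.normSq (∑ k, N k p * (starRingEnd ℂ) (N k p)) = (r p)^2 := by
      rw [hFdiag p, Complex.normSq_ofReal, sq]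
    rw [← h1]
    exact Finset.single_le_sum
      (fun q _ => Complex.normSq_nonneg (∑ k, N k p * (starRingEnd ℂ) (N k q)))
      (Finset.mem_univ p)
  have hcs2 : ∑ p : Fin d × Fin d, (r p)^2 ≤
      ∑ p : Fin d × Fin d, ∑ q : Fin d × Fin d,
        Complex.normSq (∑ k, N k p * (starRingEnd ℂ) (N k q)) :=
    Finset.sum_le_sum fun p _ => hdiag_le p
  have hgramR : ∑ p : Fin d × Fin d, ∑ q : Fin d × Fin d,
      Complex.normSq (∑ k, N k p * (starRingEnd ℂ) (N k q))
      = ∑ k, ∑ l, Complex.normSq (∑ p : Fin d × Fin d, N k p * (starRingEnd ℂ) (N l p)) := by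
    exact_mod_cast sum_normSq_gram N
  have hval : ∑ k, ∑ l,
      Complex.normSq (∑ p : Fin d × Fin d, N k p * (starRingEnd ℂ) (N l p)) = B + t^2 := by
    rw [Fintype.sum_sum_type]
    have inner1 : ∀ k : Fin m × Fin d, (∑ l : (Fin m × Fin d) ⊕ Unit,
        Complex.normSq (∑ p : Fin d × Fin d, N (Sum.inl k) p * (starRingEnd ℂ) (N l p)))
        = ∑ l : Fin m × Fin d, (Mq d m e k.1 k.2 l.1 l.2 - 1/(d:ℝ))^2 := by
      intro k
      rw [Fintype.sum_sum_type]
      have e1 : ∀ l : Fin m × Fin d,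
          Complex.normSq (∑ p : Fin d × Fin d, N (Sum.inl k) p * (starRingEnd ℂ) (N (Sum.inl l) p))
          = (Mq d m e k.1 k.2 l.1 l.2 - 1/(d:ℝ))^2 := by
        intro l
        rw [hg_ll k l]
        have hcast : ((Mq d m e k.1 k.2 l.1 l.2 : ℝ) : ℂ) - ((d:ℂ))⁻¹
            = (((Mq d m e k.1 k.2 l.1 l.2 - 1/(d:ℝ)) : ℝ) : ℂ) := by push_cast; ring
        rw [hcast, Complex.normSq_ofReal, sq]
      have e2 : (∑ l : Unit, Complex.normSq
          (∑ p : Fin d × Fin d, N (Sum.inl k) p * (starRingEnd ℂ) (N (Sum.inr l) p))) = 0 := by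
        simp only [Fintype.univ_punit, Finset.sum_singleton]
        have := hg_lr k
        rw [show (() : Unit) = PUnit.unit from rfl] at this
        rw [this, Complex.normSq_zero]
      rw [e2, add_zero]
      exact Finset.sum_congr rfl fun l _ => e1 l
    have inner2 : (∑ l : (Fin m × Fin d) ⊕ Unit, Complex.normSq
        (∑ p : Fin d × Fin d, N (Sum.inr PUnit.unit) p * (starRingEnd ℂ) (N l p))) = t^2 := by
      rw [Fintype.sum_sum_type]
      have e3 : ∀ l : Fin m × Fin d, Complex.normSq
          (∑ p : Fin d × Fin d, N (Sum.inr PUnit.unit) p * (starRingEnd ℂ) (N (Sum.inl l) p))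
          = 0 := by
        intro l
        have := hg_rl l
        rw [show (() : Unit) = PUnit.unit from rfl] at this
        rw [this, Complex.normSq_zero]
      have e4 : Complex.normSq (∑ p : Fin d × Fin d,
          N (Sum.inr PUnit.unit) p * (starRingEnd ℂ) (N (Sum.inr PUnit.unit) p)) = t^2 := by
        have := hg_rr
        rw [show (() : Unit) = PUnit.unit from rfl] at this
        rw [this, Complex.normSq_ofReal, sq]
      simp only [e3, Finset.sum_const, Finset.card_univ, smul_zero, zero_add]
      simp only [Fintype.univ_punit, Finset.sum_singleton, e4]
    simp only [inner1]
    rw [Fintype.univ_punit, Finset.sum_singleton, inner2, hBdef]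
  -- combine
  have hfinal : (A + t)^2 ≤ ((d:ℝ)*(d:ℝ)) * (B + t^2) := by
    calc (A + t)^2 ≤ ((d:ℝ)*(d:ℝ)) * ∑ p : Fin d × Fin d, (r p)^2 := hcs1
      _ ≤ ((d:ℝ)*(d:ℝ)) * (B + t^2) := by
          apply mul_le_mul_of_nonneg_left _ (by positivity)
          rw [← hval, ← hgramR]
          exact hcs2
  have htA : t * ((d:ℝ)^2 - 1) = A := by
    rw [htdef]; field_simp
  have hAt : (A + t)^2 = (t * (d:ℝ)^2)^2 := by rw [← htA]; ring
  rw [hAt] at hfinal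
  have hd2pos : (0:ℝ) < (d:ℝ)^2 := by positivity
  have h8 : t^2 * ((d:ℝ)^2 - 1) ≤ B := by nlinarith [hfinal, hd2pos]
  calc A^2 = (t^2 * ((d:ℝ)^2-1)) * ((d:ℝ)^2-1) := by rw [← htA]; ring
    _ ≤ B * ((d:ℝ)^2-1) := mul_le_mul_of_nonneg_right h8 hd21.le
    _ = ((d:ℝ)^2-1) * B := mul_comm _ _

lemma B_decomp (hd : 2 ≤ d) :
    ∑ k : Fin m × Fin d, ∑ l : Fin m × Fin d, (Mq d m e k.1 k.2 l.1 l.2 - 1/(d:ℝ))^2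
    = (m:ℝ)*((d:ℝ)-1) + ∑ z : Fin m, ∑ z' : Fin m, (if z = z' then 0 else
        ((∑ a : Fin d, ∑ a' : Fin d, Mq d m e z a z' a' ^ 2) - 1)) := by
  have hd2 : (2:ℝ) ≤ (d:ℝ) := by exact_mod_cast hd
  have hd0 : (0:ℝ) < d := by linarith
  have hdne : (d:ℝ) ≠ 0 := hd0.ne'
  have hblock : ∀ z z' : Fin m,
      (∑ a : Fin d, ∑ a' : Fin d, (Mq d m e z a z' a' - 1/(d:ℝ))^2)
      = if z = z' then ((d:ℝ)-1) else
          ((∑ a : Fin d, ∑ a' : Fin d, Mq d m e z a z' a' ^ 2) - 1) := by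
    intro z z'
    by_cases h : z = z'
    · subst h
      rw [if_pos rfl]
      have hterm : ∀ a a' : Fin d, (Mq d m e z a z a' - 1/(d:ℝ))^2
          = (1/(d:ℝ))^2 + (if a = a' then 1 - 2/(d:ℝ) else 0) := by
        intro a a'
        rw [Mq_diag honb]
        split <;> ring
      simp only [hterm, Finset.sum_add_distrib, Finset.sum_const, Finset.card_univ,
        Fintype.card_fin, nsmul_eq_mul, Finset.sum_ite_eq, Finset.mem_univ, if_true]
      field_simp
      ring
    · rw [if_neg h]
      have hterm : ∀ a a' : Fin d, (Mq d m e z a z' a' - 1/(d:ℝ))^2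
          = Mq d m e z a z' a' ^ 2 - (2/(d:ℝ)) * Mq d m e z a z' a' + (1/(d:ℝ))^2 := by
        intro a a'; ring
      simp only [hterm, Finset.sum_add_distrib, Finset.sum_sub_distrib, ← Finset.mul_sum,
        Finset.sum_const, Finset.card_univ, Fintype.card_fin, nsmul_eq_mul]
      rw [sum_sum_Mq honb z z']
      field_simp
      ring
  calc ∑ k : Fin m × Fin d, ∑ l : Fin m × Fin d, (Mq d m e k.1 k.2 l.1 l.2 - 1/(d:ℝ))^2
      = ∑ z : Fin m, ∑ a : Fin d, ∑ z' : Fin m, ∑ a' : Fin d,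
          (Mq d m e z a z' a' - 1/(d:ℝ))^2 := by
        simp only [Fintype.sum_prod_type]
    _ = ∑ z : Fin m, ∑ z' : Fin m, ∑ a : Fin d, ∑ a' : Fin d,
          (Mq d m e z a z' a' - 1/(d:ℝ))^2 :=
        Finset.sum_congr rfl fun z _ => Finset.sum_comm
    _ = ∑ z : Fin m, ∑ z' : Fin m, (if z = z' then ((d:ℝ)-1) else
          ((∑ a : Fin d, ∑ a' : Fin d, Mq d m e z a z' a' ^ 2) - 1)) :=
        Finset.sum_congr rfl fun z _ => Finset.sum_congr rfl fun z' _ => hblock z z'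
    _ = ∑ z : Fin m, ∑ z' : Fin m, ((if z = z' then ((d:ℝ)-1) else 0) +
          (if z = z' then 0 else ((∑ a : Fin d, ∑ a' : Fin d, Mq d m e z a z' a' ^ 2) - 1))) := by
        refine Finset.sum_congr rfl fun z _ => Finset.sum_congr rfl fun z' _ => ?_
        split <;> ring
    _ = (m:ℝ)*((d:ℝ)-1) + ∑ z : Fin m, ∑ z' : Fin m, (if z = z' then 0 else
          ((∑ a : Fin d, ∑ a' : Fin d, Mq d m e z a z' a' ^ 2) - 1)) := by
        simp only [Finset.sum_add_distrib, Finset.sum_ite_eq, Finset.mem_univ, if_true,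
          Finset.sum_const, Finset.card_univ, Fintype.card_fin, nsmul_eq_mul]

lemma S_lower (hd : 2 ≤ d) :
    (m:ℝ)*((d:ℝ)-1)*((m:ℝ)-((d:ℝ)+1)) ≤
      ((d:ℝ)*((d:ℝ)+1)) * ∑ z : Fin m, ∑ z' : Fin m, (if z = z' then 0 else GP d m e z z') := by
  have hd2 : (2:ℝ) ≤ (d:ℝ) := by exact_mod_cast hd
  have hd0 : (0:ℝ) < d := by linarith
  have hCS := CSmain honb hd
  rw [B_decomp honb hd] at hCS
  set SD : ℝ := ∑ z : Fin m, ∑ z' : Fin m, (if z = z' then 0 else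
      ((∑ a : Fin d, ∑ a' : Fin d, Mq d m e z a z' a' ^ 2) - 1)) with hSDdef
  set S : ℝ := ∑ z : Fin m, ∑ z' : Fin m, (if z = z' then 0 else GP d m e z z') with hSdef
  have hSDS : SD / (d:ℝ) ≤ S := by
    rw [hSDdef, hSdef, Finset.sum_div]
    refine Finset.sum_le_sum fun z _ => ?_
    rw [Finset.sum_div]
    refine Finset.sum_le_sum fun z' _ => ?_
    by_cases h : z = z'
    · simp [h]
    · rw [if_neg h, if_neg h]
      exact GP_ge honb hd z z'
  have h1 : (d:ℝ)*((d:ℝ)+1) * (SD / (d:ℝ)) ≤ (d:ℝ)*((d:ℝ)+1) * S :=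
    mul_le_mul_of_nonneg_left hSDS (by positivity)
  have h2 : (d:ℝ)*((d:ℝ)+1) * (SD / (d:ℝ)) = ((d:ℝ)+1) * SD := by
    field_simp
  rw [h2] at h1
  have hd1 : (0:ℝ) < (d:ℝ) - 1 := by linarith
  nlinarith [hCS, hd1, h1]

end Main

/-- Maximal number of orthonormal bases with overlap constraints: if there exist `m`
orthonormal bases of `ℂ^d` (`d ≥ 2`), then
`m ≤ ((d+1)/2)(1 + √(1 + 8λ(C)(λ(C)−1)/(d²−1)))`. -/
theorem stmt12 (d m : ℕ) (hd : 2 ≤ d)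
    (e : Fin m → Fin d → Fin d → ℂ)
    (honb : ∀ z a b, star (e z a) ⬝ᵥ e z b = (if a = b then (1 : ℂ) else 0)) :
    (m : ℝ) ≤ ((d : ℝ) + 1) / 2 *
      (1 + Real.sqrt (1 + 8 * lamC d m e * (lamC d m e - 1) / ((d : ℝ) ^ 2 - 1))) := by
  have hd2 : (2:ℝ) ≤ (d:ℝ) := by exact_mod_cast hd
  have hd0 : (0:ℝ) < d := by linarith
  have hd1 : (0:ℝ) < (d:ℝ) + 1 := by linarith
  have hd21 : (0:ℝ) < (d:ℝ)^2 - 1 := by nlinarith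
  set S : ℝ := ∑ z : Fin m, ∑ z' : Fin m, (if z = z' then 0 else GP d m e z z') with hSdef
  have hS0 : 0 ≤ S := by
    rw [hSdef]
    refine Finset.sum_nonneg fun z _ => Finset.sum_nonneg fun z' _ => ?_
    by_cases h : z = z'
    · simp [h]
    · rw [if_neg h]; exact GP_nonneg honb hd z z'
  have hSL := S_lower honb hd
  rw [← hSdef] at hSL
  have hlam_eq : lamC d m e = (1 + Real.sqrt (1 + 2*(d:ℝ)*S))/2 := by
    rw [lamC, hSdef]
  have h12 : (0:ℝ) ≤ 1 + 2*(d:ℝ)*S := by positivity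
  have hu2 : Real.sqrt (1 + 2*(d:ℝ)*S)^2 = 1 + 2*(d:ℝ)*S := Real.sq_sqrt h12
  have hll : lamC d m e * (lamC d m e - 1) = (d:ℝ)*S/2 := by
    rw [hlam_eq]
    have : (1 + Real.sqrt (1 + 2*(d:ℝ)*S))/2 * ((1 + Real.sqrt (1 + 2*(d:ℝ)*S))/2 - 1)
        = (Real.sqrt (1 + 2*(d:ℝ)*S)^2 - 1)/4 := by ring
    rw [this, hu2]
    ring
  have e1 : 1 + 8 * lamC d m e * (lamC d m e - 1) / ((d:ℝ)^2 - 1)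
      - ((2*(m:ℝ)-((d:ℝ)+1))/((d:ℝ)+1))^2
      = 4*(((d:ℝ)*((d:ℝ)+1))*S - (m:ℝ)*((d:ℝ)-1)*((m:ℝ)-((d:ℝ)+1)))
          / (((d:ℝ)-1)*((d:ℝ)+1)^2) := by
    rw [mul_assoc, hll]
    have hne1 : (d:ℝ) - 1 ≠ 0 := by linarith
    have hne2 : (d:ℝ) + 1 ≠ 0 := by linarith
    have hne3 : (d:ℝ)^2 - 1 ≠ 0 := hd21.ne'
    field_simp
    ring
  have hX : ((2*(m:ℝ)-((d:ℝ)+1))/((d:ℝ)+1))^2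
      ≤ 1 + 8 * lamC d m e * (lamC d m e - 1) / ((d:ℝ)^2 - 1) := by
    have hnum : 0 ≤ 4*(((d:ℝ)*((d:ℝ)+1))*S - (m:ℝ)*((d:ℝ)-1)*((m:ℝ)-((d:ℝ)+1)))
        / (((d:ℝ)-1)*((d:ℝ)+1)^2) := by
      apply div_nonneg
      · linarith [hSL]
      · have : (0:ℝ) < (d:ℝ) - 1 := by linarith
        positivity
    linarith [e1 ▸ hnum]
  have hsqrt : (2*(m:ℝ)-((d:ℝ)+1))/((d:ℝ)+1)
      ≤ Real.sqrt (1 + 8 * lamC d m e * (lamC d m e - 1) / ((d:ℝ)^2 - 1)) := by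
    calc (2*(m:ℝ)-((d:ℝ)+1))/((d:ℝ)+1)
        ≤ |(2*(m:ℝ)-((d:ℝ)+1))/((d:ℝ)+1)| := le_abs_self _
      _ = Real.sqrt (((2*(m:ℝ)-((d:ℝ)+1))/((d:ℝ)+1))^2) := (Real.sqrt_sq_eq_abs _).symm
      _ ≤ _ := Real.sqrt_le_sqrt hX
  have hfin : ((d:ℝ)+1)/2 * (1 + (2*(m:ℝ)-((d:ℝ)+1))/((d:ℝ)+1)) = (m:ℝ) := by
    field_simp
    ring
  calc (m:ℝ) = ((d:ℝ)+1)/2 * (1 + (2*(m:ℝ)-((d:ℝ)+1))/((d:ℝ)+1)) := hfin.symm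
    _ ≤ ((d:ℝ)+1)/2 * (1 + Real.sqrt (1 + 8 * lamC d m e * (lamC d m e - 1) / ((d:ℝ)^2 - 1))) := by
        apply mul_le_mul_of_nonneg_left _ (by positivity)
        linarith [hsqrt]
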